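/- For every sticky map $\sigma: T_n \to C_n$, the set $K_\sigma = \bigcup_{s \in T_n} P_{\sigma,s}$ satisfies $|K_\sigma| \ge c \cdot \frac{\log n}{n}$ for an absolute constant $c > 0$ (for $n \ge 2$). -/

import Mathlib

open MeasureTheory
open scoped ENNReal

/-- The real number `∑ s j / 3^(j+1)` associated to the ternary string `s`. -/
noncomputable def valF {n : ℕ} (s : Fin n → Fin 3) : ℝ :=
  ∑ j : Fin n, (s j : ℝ) / 3 ^ ((j : ℕ) + 1)

/-- A map `σ : T_n → C_n` is sticky if its values have all ternary digits in
`{0, 2}` and the `j`-th digit of `σ s` depends only on the first `j` digits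
of `s`. -/
def Sticky {n : ℕ} (σ : (Fin n → Fin 3) → (Fin n → Fin 3)) : Prop :=
  (∀ s j, σ s j ≠ 1) ∧
    ∀ s₁ s₂ : Fin n → Fin 3, ∀ j : Fin n,
      (∀ i : Fin n, i ≤ j → s₁ i = s₂ i) → σ s₁ j = σ s₂ j

/-- The parallelogram (thin tube) over `0 ≤ x ≤ 1` with `y`-intercept `b`,
slope `v` and vertical thickness `3 ^ (-(n+1))`: its corners are `(0, b)`,
`(0, b + 3^{-(n+1)})`, `(1, b + v)`, `(1, b + v + 3^{-(n+1)})`. -/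
def tube (n : ℕ) (b v : ℝ) : Set (ℝ × ℝ) :=
  {p | 0 ≤ p.1 ∧ p.1 ≤ 1 ∧ b + v * p.1 ≤ p.2 ∧
    p.2 ≤ b + v * p.1 + 1 / 3 ^ (n + 1)}

/-- The parallelogram `P_{σ,s}` with corners `(0, s/3)`, `(0, s/3 + 3^{-(n+1)})`,
`(1, s/3 + σ(s))`, `(1, s/3 + 3^{-(n+1)} + σ(s))`. -/
noncomputable def Ptube {n : ℕ} (σ : (Fin n → Fin 3) → (Fin n → Fin 3))
    (s : Fin n → Fin 3) : Set (ℝ × ℝ) :=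
  tube n (valF s / 3) (valF (σ s))

/-- The "Kakeya set" `K_σ` associated to a sticky map `σ`. -/
noncomputable def Kset {n : ℕ} (σ : (Fin n → Fin 3) → (Fin n → Fin 3)) :
    Set (ℝ × ℝ) :=
  ⋃ s : Fin n → Fin 3, Ptube σ s

/-- The vertical strip `S_j = [3^{-j}, 3^{1-j}] × ℝ`. -/
def strip (j : ℕ) : Set (ℝ × ℝ) :=
  Set.Icc ((3 : ℝ) ^ (-(j : ℤ))) ((3 : ℝ) ^ (1 - (j : ℤ))) ×ˢ Set.univ

namespace KakeyaLB
open Finset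

/-- telescoping geometric sum -/
lemma geom_tel (a : ℕ) : ∀ b : ℕ, a ≤ b →
    ∑ m ∈ Finset.Ico a b, (2:ℝ)/3^(m+1) = 1/3^a - 1/3^b := by
  intro b
  induction b with
  | zero => intro h; interval_cases a; simp
  | succ b ih =>
    intro h
    rcases Nat.lt_or_ge a (b+1) with h1 | h2
    · have hab : a ≤ b := Nat.lt_succ_iff.mp h1
      rw [Finset.sum_Ico_succ_top hab, ih hab]
      have h3 : (3:ℝ)^(b+1) = 3^b * 3 := by ring
      have hb : (3:ℝ)^b ≠ 0 := by positivity
      field_simp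
      ring
    · have : a = b + 1 := le_antisymm h h2
      subst this
      simp

lemma abs_tail_le (d : ℕ → ℝ) (hd : ∀ m, |d m| ≤ 2) (a b : ℕ) (hab : a ≤ b) :
    |∑ m ∈ Finset.Ico a b, d m / 3^(m+1)| ≤ 1/3^a - 1/3^b := by
  calc |∑ m ∈ Finset.Ico a b, d m / 3^(m+1)|
      ≤ ∑ m ∈ Finset.Ico a b, |d m / 3^(m+1)| := Finset.abs_sum_le_sum_abs _ _
    _ ≤ ∑ m ∈ Finset.Ico a b, (2:ℝ)/3^(m+1) := by
        refine Finset.sum_le_sum fun m _ => ?_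
        rw [abs_div, abs_of_pos (by positivity : (0:ℝ) < 3^(m+1))]
        gcongr
        exact hd m
    _ = 1/3^a - 1/3^b := geom_tel a b hab

lemma sum_diff_lower (d : ℕ → ℝ) (hd : ∀ m, |d m| ≤ 2) (k l : ℕ) (hkl : k ≤ l)
    (h0 : ∀ m < k, d m = 0) {D : ℝ} (hD : D ≤ |d k|) :
    D/3^(k+1) - (1/3^(k+1) - 1/3^(l+1)) ≤ |∑ m ∈ Finset.range (l+1), d m / 3^(m+1)| := by
  have hsplit1 : ∑ m ∈ Finset.range (l+1), d m / 3^(m+1)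
      = ∑ m ∈ Finset.Ico 0 k, d m / 3^(m+1) + ∑ m ∈ Finset.Ico k (l+1), d m / 3^(m+1) := by
    rw [Finset.range_eq_Ico, ← Finset.sum_Ico_consecutive _ (Nat.zero_le k) (by omega)]
  have hhead : ∑ m ∈ Finset.Ico 0 k, d m / 3^(m+1) = 0 :=
    Finset.sum_eq_zero fun m hm => by
      rw [h0 m (Finset.mem_Ico.mp hm).2]; simp
  have hsplit2 : ∑ m ∈ Finset.Ico k (l+1), d m / 3^(m+1)
      = d k / 3^(k+1) + ∑ m ∈ Finset.Ico (k+1) (l+1), d m / 3^(m+1) := by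
    rw [← Finset.sum_Ico_consecutive _ (by omega : k ≤ k+1) (by omega : k+1 ≤ l+1)]
    congr 1
    rw [Nat.Ico_succ_singleton, Finset.sum_singleton]
  have htail : |∑ m ∈ Finset.Ico (k+1) (l+1), d m / 3^(m+1)| ≤ 1/3^(k+1) - 1/3^(l+1) :=
    abs_tail_le d hd (k+1) (l+1) (by omega)
  have habs : |d k / 3^(k+1)| = |d k|/3^(k+1) := by
    rw [abs_div, abs_of_pos (by positivity : (0:ℝ) < 3^(k+1))]
  have h1 : |d k / 3^(k+1)| ≤ |∑ m ∈ Finset.range (l+1), d m / 3^(m+1)|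
      + |∑ m ∈ Finset.Ico (k+1) (l+1), d m / 3^(m+1)| := by
    rw [hsplit1, hhead, zero_add, hsplit2]
    have := abs_add_le (d k / 3^(k+1) + ∑ m ∈ Finset.Ico (k+1) (l+1), d m / 3^(m+1))
      (-(∑ m ∈ Finset.Ico (k+1) (l+1), d m / 3^(m+1)))
    simp only [add_neg_cancel_right, abs_neg] at this
    linarith
  have hDk : D/3^(k+1) ≤ |d k|/3^(k+1) :=
    div_le_div_of_nonneg_right hD (by positivity) |>.trans_eq rfl
  rw [← habs] at hDk
  linarith

section Strings
variable {n : ℕ}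

/-- the `m`-th digit of a string, as a natural number -/
def dig (s : Fin n → Fin 3) (m : ℕ) : ℕ := if h : m < n then (s ⟨m, h⟩ : ℕ) else 0

lemma dig_le_two (s : Fin n → Fin 3) (m : ℕ) : dig s m ≤ 2 := by
  unfold dig; split
  · exact Nat.lt_succ_iff.mp (Fin.is_lt _)
  · omega

lemma valF_eq (s : Fin n → Fin 3) :
    valF s = ∑ m ∈ Finset.range n, (dig s m : ℝ)/3^(m+1) := by
  rw [valF, ← Fin.sum_univ_eq_sum_range (fun m => (dig s m : ℝ)/3^(m+1)) n]
  refine Finset.sum_congr rfl fun j _ => ?_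
  unfold dig
  rw [dif_pos j.is_lt]

lemma valF_sub (s t : Fin n → Fin 3) :
    valF s - valF t = ∑ m ∈ Finset.range n, ((dig s m : ℝ) - dig t m)/3^(m+1) := by
  rw [valF_eq, valF_eq, ← Finset.sum_sub_distrib]
  exact Finset.sum_congr rfl fun m _ => (sub_div _ _ _).symm

/-- the integer encoding of a string -/
def enc (s : Fin n → Fin 3) : ℕ := ∑ m ∈ Finset.range n, dig s m * 3^(n-1-m)

/-- prefix encoding of length `l+1` -/
def pref (l : ℕ) (s : Fin n → Fin 3) : ℕ := ∑ m ∈ Finset.range (l+1), dig s m * 3^(l-m)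

lemma enc_val (s : Fin n → Fin 3) : (enc s : ℝ) = 3^n * valF s := by
  rw [valF_eq, Finset.mul_sum, enc]
  push_cast
  refine Finset.sum_congr rfl fun m hm => ?_
  have hmn : m < n := Finset.mem_range.mp hm
  have h3 : (3:ℝ)^n = 3^(n-1-m) * 3^(m+1) := by
    rw [← pow_add]; congr 1; omega
  rw [h3]
  field_simp

lemma valF_nonneg (s : Fin n → Fin 3) : 0 ≤ valF s := by
  rw [valF_eq]; exact Finset.sum_nonneg fun m _ => by positivity

lemma valF_le (s : Fin n → Fin 3) : valF s ≤ 1 - 1/3^n := by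
  rw [valF_eq]
  calc ∑ m ∈ Finset.range n, (dig s m : ℝ)/3^(m+1)
      ≤ ∑ m ∈ Finset.range n, (2:ℝ)/3^(m+1) := by
        refine Finset.sum_le_sum fun m _ => ?_
        apply div_le_div_of_nonneg_right _ (by positivity)
        exact_mod_cast dig_le_two s m
    _ = 1/3^0 - 1/3^n := by rw [Finset.range_eq_Ico]; exact geom_tel 0 n (Nat.zero_le n)
    _ = 1 - 1/3^n := by norm_num

lemma enc_lt (s : Fin n → Fin 3) : enc s < 3^n := by
  have h : (enc s : ℝ) < (3:ℝ)^n := by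
    rw [enc_val]
    have h1 := valF_le s
    have h2 : (0:ℝ) < 3^n := by positivity
    have h3 : (3:ℝ)^n * valF s ≤ 3^n * (1 - 1/3^n) := by nlinarith
    have h4 : (3:ℝ)^n * (1 - 1/3^n) = 3^n - 1 := by field_simp
    linarith
  exact_mod_cast h

lemma exists_dig_diff {s t : Fin n → Fin 3} (h : s ≠ t) : ∃ m, dig s m ≠ dig t m := by
  by_contra hc
  push_neg at hc
  apply h
  funext j
  have := hc j.val
  unfold dig at this
  rw [dif_pos j.is_lt, dif_pos j.is_lt] at this
  exact Fin.ext (by simpa using this)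

lemma nat_cast_diff_ge_one {a b : ℕ} (h : a ≠ b) : 1 ≤ |(a:ℝ) - b| := by
  rcases Nat.lt_or_ge a b with h1 | h1
  · have hb : (a:ℝ) + 1 ≤ b := by exact_mod_cast h1
    rw [abs_sub_comm, abs_of_pos (by linarith)]
    linarith
  · have h2 : b < a := lt_of_le_of_ne h1 (Ne.symm h)
    have hb : (b:ℝ) + 1 ≤ a := by exact_mod_cast h2
    rw [abs_of_pos (by linarith)]
    linarith

/-- separation of distinct strings -/
lemma valF_sep {s t : Fin n → Fin 3} (h : s ≠ t) : 1/3^n ≤ |valF s - valF t| := by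
  have hex := exists_dig_diff h
  classical
  set k := Nat.find hex with hk
  have hkdiff : dig s k ≠ dig t k := Nat.find_spec hex
  have hklt : k < n := by
    by_contra hc
    push_neg at hc
    apply hkdiff
    unfold dig
    rw [dif_neg (by omega), dif_neg (by omega)]
  have hbelow : ∀ m < k, dig s m = dig t m := fun m hm => by
    by_contra hc; exact Nat.find_min hex hm hc
  have hn1 : n - 1 + 1 = n := by omega
  have hd2 : ∀ m, |(dig s m : ℝ) - dig t m| ≤ 2 := fun m => by
    have h1 := dig_le_two s m; have h2 := dig_le_two t m
    have h1' : (dig s m : ℝ) ≤ 2 := by exact_mod_cast h1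
    have h2' : (dig t m : ℝ) ≤ 2 := by exact_mod_cast h2
    have h3' : (0:ℝ) ≤ dig s m := Nat.cast_nonneg _
    have h4' : (0:ℝ) ≤ dig t m := Nat.cast_nonneg _
    rw [abs_sub_le_iff]; constructor <;> linarith
  have := sum_diff_lower (fun m => (dig s m : ℝ) - dig t m) hd2
    k (n-1) (by omega)
    (fun m hm => by show (dig s m:ℝ) - dig t m = 0; rw [hbelow m hm, sub_self])
    (D := 1) (nat_cast_diff_ge_one hkdiff)
  rw [hn1] at this
  rw [valF_sub]
  calc (1:ℝ)/3^n = 1/3^(k+1) - (1/3^(k+1) - 1/3^n) := by ring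
    _ ≤ _ := by simpa using this

lemma enc_inj {s t : Fin n → Fin 3} (h : enc s = enc t) : s = t := by
  by_contra hc
  have h1 := valF_sep hc
  have h2 : (enc s : ℝ) = enc t := by exact_mod_cast h
  rw [enc_val, enc_val] at h2
  have h3 : (0:ℝ) < 3^n := by positivity
  have h4 : valF s = valF t := mul_left_cancel₀ (by positivity : (3:ℝ)^n ≠ 0) h2
  rw [h4, sub_self, abs_zero] at h1
  have : (0:ℝ) < 1/3^n := by positivity
  linarith

lemma pref_val {l : ℕ} (hl : l < n) (s : Fin n → Fin 3) :
    (pref l s : ℝ) = 3^(l+1) * ∑ m ∈ Finset.range (l+1), (dig s m : ℝ)/3^(m+1) := by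
  rw [Finset.mul_sum, pref]
  push_cast
  refine Finset.sum_congr rfl fun m hm => ?_
  have hml : m < l + 1 := Finset.mem_range.mp hm
  have h3 : (3:ℝ)^(l+1) = 3^(l-m) * 3^(m+1) := by
    rw [← pow_add]; congr 1; omega
  rw [h3]
  field_simp

/-- if two strings differ at some digit `≤ l` then their `l`-prefixes differ -/
lemma pref_ne {l : ℕ} (hl : l < n) {s t : Fin n → Fin 3}
    (hdiff : ∃ m ≤ l, dig s m ≠ dig t m) : pref l s ≠ pref l t := by
  classical
  have hex : ∃ m, dig s m ≠ dig t m := by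
    obtain ⟨m, _, hm⟩ := hdiff; exact ⟨m, hm⟩
  set k := Nat.find hex with hk
  have hkdiff : dig s k ≠ dig t k := Nat.find_spec hex
  have hkle : k ≤ l := by
    obtain ⟨m, hml, hm⟩ := hdiff
    exact le_trans (Nat.find_min' hex hm) hml
  have hbelow : ∀ m < k, dig s m = dig t m := fun m hm => by
    by_contra hc; exact Nat.find_min hex hm hc
  have hd2 : ∀ m, |(dig s m : ℝ) - dig t m| ≤ 2 := fun m => by
    have h1 := dig_le_two s m; have h2 := dig_le_two t m
    have h1' : (dig s m : ℝ) ≤ 2 := by exact_mod_cast h1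
    have h2' : (dig t m : ℝ) ≤ 2 := by exact_mod_cast h2
    have h3' : (0:ℝ) ≤ dig s m := Nat.cast_nonneg _
    have h4' : (0:ℝ) ≤ dig t m := Nat.cast_nonneg _
    rw [abs_sub_le_iff]; constructor <;> linarith
  have hlow := sum_diff_lower (fun m => (dig s m : ℝ) - dig t m) hd2
    k l hkle
    (fun m hm => by show (dig s m:ℝ) - dig t m = 0; rw [hbelow m hm, sub_self])
    (D := 1) (nat_cast_diff_ge_one hkdiff)
  intro hcontra
  have heq : (pref l s : ℝ) = pref l t := by exact_mod_cast hcontra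
  rw [pref_val hl, pref_val hl] at heq
  have h3 : (0:ℝ) < 3^(l+1) := by positivity
  have heq2 : ∑ m ∈ Finset.range (l+1), (dig s m : ℝ)/3^(m+1)
      = ∑ m ∈ Finset.range (l+1), (dig t m : ℝ)/3^(m+1) := by
    have := mul_left_cancel₀ (ne_of_gt h3) heq
    exact this
  have hzero : ∑ m ∈ Finset.range (l+1), ((dig s m : ℝ) - dig t m)/3^(m+1) = 0 := by
    rw [show (fun m => ((dig s m : ℝ) - dig t m)/3^(m+1)) = fun m => (dig s m : ℝ)/3^(m+1) - (dig t m : ℝ)/3^(m+1) from funext fun m => sub_div _ _ _]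
    rw [Finset.sum_sub_distrib, heq2, sub_self]
  rw [hzero] at hlow
  simp only [abs_zero] at hlow
  have h5 : (0:ℝ) < 1/3^(k+1) := by positivity
  have h6 : (0:ℝ) < 1/3^(l+1) := by positivity
  linarith

/-- division of `enc` recovers the prefix -/
lemma enc_div_pref {l : ℕ} (hl : l < n) (s : Fin n → Fin 3) :
    enc s / 3^(n-1-l) = pref l s := by
  have hsplit : enc s = pref l s * 3^(n-1-l) + ∑ m ∈ Finset.Ico (l+1) n, dig s m * 3^(n-1-m) := by
    rw [enc, Finset.range_eq_Ico,
      ← Finset.sum_Ico_consecutive _ (Nat.zero_le (l+1)) (by omega : l+1 ≤ n),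
      ← Finset.range_eq_Ico]
    congr 1
    rw [pref, Finset.sum_mul]
    refine Finset.sum_congr rfl fun m hm => ?_
    have hml : m < l + 1 := Finset.mem_range.mp hm
    rw [mul_assoc, ← pow_add]
    congr 2
    omega
  have hrem : ∑ m ∈ Finset.Ico (l+1) n, dig s m * 3^(n-1-m) < 3^(n-1-l) := by
    have hreal : ((∑ m ∈ Finset.Ico (l+1) n, dig s m * 3^(n-1-m) : ℕ) : ℝ)
        ≤ (3:ℝ)^(n-1-l) - 1 := by
      push_cast
      have hterm : ∀ m ∈ Finset.Ico (l+1) n, (dig s m : ℝ) * 3^(n-1-m)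
          ≤ 3^n * (2 / 3^(m+1)) := by
        intro m hm
        obtain ⟨hm1, hm2⟩ := Finset.mem_Ico.mp hm
        have h3 : (3:ℝ)^n = 3^(n-1-m) * 3^(m+1) := by
          rw [← pow_add]; congr 1; omega
        rw [h3]
        have : (dig s m : ℝ) ≤ 2 := by exact_mod_cast dig_le_two s m
        have h4 : (0:ℝ) < 3^(m+1) := by positivity
        have h5 : (0:ℝ) < 3^(n-1-m) := by positivity
        calc (dig s m : ℝ) * 3^(n-1-m) ≤ 2 * 3^(n-1-m) := by nlinarith
          _ = 3^(n-1-m) * 3^(m+1) * (2/3^(m+1)) := by field_simp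
      calc ∑ m ∈ Finset.Ico (l+1) n, (dig s m : ℝ) * 3^(n-1-m)
          ≤ ∑ m ∈ Finset.Ico (l+1) n, (3:ℝ)^n * (2/3^(m+1)) :=
            Finset.sum_le_sum hterm
        _ = 3^n * ∑ m ∈ Finset.Ico (l+1) n, (2:ℝ)/3^(m+1) := by rw [Finset.mul_sum]
        _ = 3^n * (1/3^(l+1) - 1/3^n) := by rw [geom_tel (l+1) n (by omega)]
        _ = 3^n/3^(l+1) - 1 := by
            have : (3:ℝ)^n ≠ 0 := by positivity
            field_simp
        _ = (3:ℝ)^(n-1-l) - 1 := by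
            congr 1
            rw [eq_comm, eq_div_iff (by positivity : (3:ℝ)^(l+1) ≠ 0), ← pow_add]
            congr 1
            omega
    have hnat : ((∑ m ∈ Finset.Ico (l+1) n, dig s m * 3^(n-1-m) : ℕ) : ℝ)
        < (3:ℝ)^(n-1-l) := by
      have h1 : (1:ℝ) ≤ 3^(n-1-l) := one_le_pow₀ (by norm_num)
      linarith
    exact_mod_cast hnat
  have hM : 0 < 3^(n-1-l) := Nat.pow_pos (by norm_num)
  rw [hsplit, add_comm, Nat.add_mul_div_right _ _ hM, Nat.div_eq_of_lt hrem, zero_add]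

/-- index of the first differing digit (or `n` if equal) -/
def fdiff (u v : Fin n → Fin 3) : ℕ :=
  Nat.find (⟨n, Or.inl le_rfl⟩ : ∃ m, n ≤ m ∨ dig u m ≠ dig v m)

lemma fdiff_agree_below (u v : Fin n → Fin 3) :
    ∀ m < fdiff u v, dig u m = dig v m := by
  intro m hm
  have := Nat.find_min (⟨n, Or.inl le_rfl⟩ : ∃ m, n ≤ m ∨ dig u m ≠ dig v m) hm
  push_neg at this
  exact this.2

lemma fdiff_le (u v : Fin n → Fin 3) : fdiff u v ≤ n :=
  Nat.find_min' _ (Or.inl le_rfl)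

lemma fdiff_spec {u v : Fin n → Fin 3} (h : u ≠ v) :
    fdiff u v < n ∧ dig u (fdiff u v) ≠ dig v (fdiff u v) ∧
      ∀ m < fdiff u v, dig u m = dig v m := by
  obtain ⟨m, hm⟩ := exists_dig_diff h
  have hmn : m < n := by
    by_contra hc
    push_neg at hc
    apply hm
    unfold dig
    rw [dif_neg (by omega), dif_neg (by omega)]
  have hle : fdiff u v ≤ m := Nat.find_min' _ (Or.inr hm)
  have hspec : n ≤ fdiff u v ∨ dig u (fdiff u v) ≠ dig v (fdiff u v) :=
    Nat.find_spec (⟨n, Or.inl le_rfl⟩ : ∃ m, n ≤ m ∨ dig u m ≠ dig v m)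
  rcases hspec with hs | hs
  · exfalso; omega
  · exact ⟨by omega, hs, fdiff_agree_below u v⟩

lemma valF_sub_eq_tail (u v : Fin n → Fin 3) :
    valF u - valF v = ∑ m ∈ Finset.Ico (fdiff u v) n, ((dig u m : ℝ) - dig v m)/3^(m+1) := by
  rcases Nat.le_total (fdiff u v) n with hfn | hfn
  · rw [valF_sub, Finset.range_eq_Ico,
      ← Finset.sum_Ico_consecutive _ (Nat.zero_le (fdiff u v)) hfn]
    have : ∑ m ∈ Finset.Ico 0 (fdiff u v), ((dig u m : ℝ) - dig v m)/3^(m+1) = 0 :=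
      Finset.sum_eq_zero fun m hm => by
        rw [fdiff_agree_below u v m (Finset.mem_Ico.mp hm).2, sub_self, zero_div]
    rw [this, zero_add]
  · have h1 : Finset.Ico (fdiff u v) n = ∅ := Finset.Ico_eq_empty (by omega)
    rw [h1, Finset.sum_empty, valF_sub]
    exact Finset.sum_eq_zero fun m hm => by
      rw [fdiff_agree_below u v m (by
        have := Finset.mem_range.mp hm; omega), sub_self, zero_div]

lemma dig_abs_le_two (u v : Fin n → Fin 3) (m : ℕ) : |(dig u m : ℝ) - dig v m| ≤ 2 := by
  have h1 : (dig u m : ℝ) ≤ 2 := by exact_mod_cast dig_le_two u m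
  have h2 : (dig v m : ℝ) ≤ 2 := by exact_mod_cast dig_le_two v m
  have h3 : (0:ℝ) ≤ dig u m := Nat.cast_nonneg _
  have h4 : (0:ℝ) ≤ dig v m := Nat.cast_nonneg _
  rw [abs_sub_le_iff]; constructor <;> linarith

/-- upper bound through the first differing digit -/
lemma valF_diff_upper (u v : Fin n → Fin 3) :
    |valF u - valF v| ≤ 1/3^(fdiff u v) := by
  rcases Nat.le_total (fdiff u v) n with hfn | hfn
  · rw [valF_sub_eq_tail]
    have := abs_tail_le (fun m => (dig u m : ℝ) - dig v m) (dig_abs_le_two u v)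
      (fdiff u v) n hfn
    have h2 : (0:ℝ) < 1/3^n := by positivity
    calc |∑ m ∈ Finset.Ico (fdiff u v) n, ((dig u m : ℝ) - dig v m)/3^(m+1)|
        ≤ 1/3^(fdiff u v) - 1/3^n := this
      _ ≤ 1/3^(fdiff u v) := by linarith
  · rw [valF_sub_eq_tail, Finset.Ico_eq_empty (by omega), Finset.sum_empty, abs_zero]
    positivity

/-- lower bound for `{0,2}`-strings differing first at `fdiff` -/
lemma valF_diff_lower {u v : Fin n → Fin 3} (hne : u ≠ v)
    (hu : ∀ j, u j ≠ 1) (hv : ∀ j, v j ≠ 1) :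
    1/3^(fdiff u v + 1) ≤ |valF u - valF v| := by
  obtain ⟨hlt, hdk, hbelow⟩ := fdiff_spec hne
  set k := fdiff u v with hk
  have hdigu : dig u k = 0 ∨ dig u k = 2 := by
    have h1 : dig u k ≤ 2 := dig_le_two u k
    have h2 : dig u k ≠ 1 := by
      unfold dig
      rw [dif_pos hlt]
      intro hc
      exact hu ⟨k, hlt⟩ (Fin.ext (by simpa using hc))
    omega
  have hdigv : dig v k = 0 ∨ dig v k = 2 := by
    have h1 : dig v k ≤ 2 := dig_le_two v k
    have h2 : dig v k ≠ 1 := by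
      unfold dig
      rw [dif_pos hlt]
      intro hc
      exact hv ⟨k, hlt⟩ (Fin.ext (by simpa using hc))
    omega
  have habs2 : (2:ℝ) ≤ |(dig u k : ℝ) - dig v k| := by
    rcases hdigu with h1 | h1 <;> rcases hdigv with h2 | h2 <;>
      rw [h1, h2] <;> first | (exact absurd rfl (by rw [h1, h2] at hdk; exact hdk)) | norm_num
  have hn1 : n - 1 + 1 = n := by omega
  have hlow := sum_diff_lower (fun m => (dig u m : ℝ) - dig v m) (dig_abs_le_two u v)
    k (n-1) (by omega)
    (fun m hm => by show (dig u m:ℝ) - dig v m = 0; rw [hbelow m hm, sub_self])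
    (D := 2) habs2
  rw [hn1] at hlow
  rw [valF_sub]
  have h5 : (0:ℝ) < 1/3^n := by positivity
  calc (1:ℝ)/3^(k+1) = 2/3^(k+1) - (1/3^(k+1) - 0) := by ring
    _ ≤ 2/3^(k+1) - (1/3^(k+1) - 1/3^n) := by linarith
    _ ≤ _ := by simpa using hlow

/-- stickiness: a difference in `σ`-digit `l` forces a string difference at some digit `≤ l` -/
lemma sticky_digit {σ : (Fin n → Fin 3) → (Fin n → Fin 3)}
    (hσ : Sticky σ) {s t : Fin n → Fin 3} (hst : σ s ≠ σ t) :
    ∃ m ≤ fdiff (σ s) (σ t), dig s m ≠ dig t m := by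
  obtain ⟨hlt, hdk, _⟩ := fdiff_spec hst
  set l := fdiff (σ s) (σ t) with hl
  by_contra hc
  push_neg at hc
  apply hdk
  have hagree : ∀ i : Fin n, i ≤ ⟨l, hlt⟩ → s i = t i := by
    intro i hi
    have hiv : i.val ≤ l := hi
    have := hc i.val hiv
    unfold dig at this
    rw [dif_pos i.is_lt, dif_pos i.is_lt] at this
    exact Fin.ext (by simpa using this)
  have := hσ.2 s t ⟨l, hlt⟩ hagree
  unfold dig
  rw [dif_pos hlt, dif_pos hlt, this]

end Strings

section MeasureLemmas

lemma tube_measurable (n : ℕ) (b v : ℝ) : MeasurableSet (tube n b v) := by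
  have h : tube n b v = ({p : ℝ×ℝ | 0 ≤ p.1} ∩ {p : ℝ×ℝ | p.1 ≤ 1}) ∩
      ({p : ℝ×ℝ | b + v*p.1 ≤ p.2} ∩ {p : ℝ×ℝ | p.2 ≤ b + v*p.1 + 1/3^(n+1)}) := by
    ext p; simp only [tube, Set.mem_setOf_eq, Set.mem_inter_iff]; tauto
  rw [h]
  refine MeasurableSet.inter (MeasurableSet.inter ?_ ?_) (MeasurableSet.inter ?_ ?_) <;>
    apply IsClosed.measurableSet
  · exact isClosed_le continuous_const continuous_fst
  · exact isClosed_le continuous_fst continuous_const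
  · exact isClosed_le (by fun_prop) continuous_snd
  · exact isClosed_le continuous_snd (by fun_prop)

lemma vol_eq_slices {A : Set (ℝ×ℝ)} (hA : MeasurableSet A) :
    volume A = ∫⁻ x, volume (Prod.mk x ⁻¹' A) := by
  rw [MeasureTheory.Measure.volume_eq_prod, MeasureTheory.Measure.prod_apply hA]

lemma stripSet_measurable (X : ℝ) :
    MeasurableSet ((Set.Ico X (3*X)) ×ˢ (Set.univ : Set ℝ)) :=
  measurableSet_Ico.prod MeasurableSet.univ

/-- exact volume of a tube within a vertical strip -/
lemma vol_tube_strip (n : ℕ) (b v X : ℝ) (hX : 0 < X) (h3 : 3*X ≤ 1) :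
    volume (tube n b v ∩ ((Set.Ico X (3*X)) ×ˢ (Set.univ : Set ℝ)))
      = ENNReal.ofReal (2*X*(1/3^(n+1))) := by
  set δ : ℝ := 1/3^(n+1) with hδ
  have hδpos : 0 < δ := by positivity
  set A := tube n b v ∩ ((Set.Ico X (3*X)) ×ˢ (Set.univ : Set ℝ)) with hA
  have hAm : MeasurableSet A := (tube_measurable n b v).inter (stripSet_measurable X)
  rw [vol_eq_slices hAm]
  have hslice : ∀ x, volume (Prod.mk x ⁻¹' A)
      = (Set.Ico X (3*X)).indicator (fun _ => ENNReal.ofReal δ) x := by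
    intro x
    by_cases hx : x ∈ Set.Ico X (3*X)
    · have h0x : (0:ℝ) ≤ x := le_trans hX.le hx.1
      have h1x : x ≤ 1 := le_trans hx.2.le (by linarith)
      have hset : Prod.mk x ⁻¹' A = Set.Icc (b + v*x) (b + v*x + δ) := by
        ext y
        simp only [hA, Set.mem_preimage, Set.mem_inter_iff, Set.mem_prod, Set.mem_univ,
          and_true, Set.mem_Icc, tube, Set.mem_setOf_eq]
        constructor
        · rintro ⟨⟨_, _, h1, h2⟩, _⟩; exact ⟨h1, h2⟩
        · rintro ⟨h1, h2⟩; exact ⟨⟨h0x, h1x, h1, h2⟩, hx⟩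
      rw [hset, Real.volume_Icc, Set.indicator_of_mem hx]
      congr 1
      ring
    · have hset : Prod.mk x ⁻¹' A = ∅ := by
        ext y
        simp only [hA, Set.mem_preimage, Set.mem_inter_iff, Set.mem_prod, Set.mem_univ,
          and_true, Set.mem_empty_iff_false, iff_false]
        rintro ⟨_, hx'⟩; exact hx hx'
      rw [hset, Set.indicator_of_notMem hx, measure_empty]
  rw [lintegral_congr hslice, lintegral_indicator measurableSet_Ico,
    setLIntegral_const, Real.volume_Ico]
  rw [← ENNReal.ofReal_mul hδpos.le]
  congr 1
  ring

/-- the overlap set in `x` for a pair of tubes -/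
def ovSet (n : ℕ) (c d X : ℝ) : Set ℝ :=
  {x : ℝ | x ∈ Set.Ico X (3*X) ∧ |c + d*x| ≤ 1/3^(n+1)}

lemma ovSet_measurable (n : ℕ) (c d X : ℝ) : MeasurableSet (ovSet n c d X) := by
  have h : ovSet n c d X
      = Set.Ico X (3*X) ∩ (fun x => |c + d*x|) ⁻¹' (Set.Iic (1/3^(n+1))) := by
    ext x; simp [ovSet, Set.mem_Iic]
  rw [h]
  exact measurableSet_Ico.inter ((Continuous.measurable (by fun_prop)) measurableSet_Iic)

/-- pair overlap volume bound via the overlap set -/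
lemma vol_pair_le (n : ℕ) (b₁ v₁ b₂ v₂ X : ℝ) :
    volume (tube n b₁ v₁ ∩ tube n b₂ v₂ ∩ ((Set.Ico X (3*X)) ×ˢ (Set.univ : Set ℝ)))
      ≤ ENNReal.ofReal (1/3^(n+1)) * volume (ovSet n (b₂ - b₁) (v₂ - v₁) X) := by
  set δ : ℝ := 1/3^(n+1) with hδ
  have hδpos : 0 < δ := by positivity
  set E := ovSet n (b₂ - b₁) (v₂ - v₁) X with hE
  set A := tube n b₁ v₁ ∩ tube n b₂ v₂ ∩ ((Set.Ico X (3*X)) ×ˢ (Set.univ : Set ℝ)) with hA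
  have hAm : MeasurableSet A :=
    ((tube_measurable n b₁ v₁).inter (tube_measurable n b₂ v₂)).inter (stripSet_measurable X)
  rw [vol_eq_slices hAm]
  have hbound : ∀ x, volume (Prod.mk x ⁻¹' A) ≤ E.indicator (fun _ => ENNReal.ofReal δ) x := by
    intro x
    by_cases hx : x ∈ E
    · rw [Set.indicator_of_mem hx]
      have hsub : Prod.mk x ⁻¹' A ⊆ Set.Icc (b₁ + v₁*x) (b₁ + v₁*x + δ) := by
        intro y hy
        obtain ⟨⟨ht1, _⟩, _⟩ := hy
        exact ⟨ht1.2.2.1, ht1.2.2.2⟩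
      calc volume (Prod.mk x ⁻¹' A) ≤ volume (Set.Icc (b₁ + v₁*x) (b₁ + v₁*x + δ)) :=
            measure_mono hsub
        _ = ENNReal.ofReal δ := by rw [Real.volume_Icc]; congr 1; ring
    · have hempty : Prod.mk x ⁻¹' A = ∅ := by
        ext y
        simp only [Set.mem_preimage, Set.mem_empty_iff_false, iff_false]
        intro hy
        obtain ⟨⟨ht1, ht2⟩, hst⟩ := hy
        apply hx
        refine ⟨hst.1, ?_⟩
        have e1 : b₁ + v₁*x ≤ y := ht1.2.2.1
        have e2 : y ≤ b₁ + v₁*x + δ := ht1.2.2.2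
        have e3 : b₂ + v₂*x ≤ y := ht2.2.2.1
        have e4 : y ≤ b₂ + v₂*x + δ := ht2.2.2.2
        rw [abs_le]
        constructor <;> nlinarith
      rw [hempty, measure_empty]
      exact zero_le
  calc ∫⁻ x, volume (Prod.mk x ⁻¹' A) ≤ ∫⁻ x, E.indicator (fun _ => ENNReal.ofReal δ) x :=
        lintegral_mono hbound
    _ = ENNReal.ofReal δ * volume E := by
        rw [lintegral_indicator (ovSet_measurable n _ _ X), setLIntegral_const]

lemma vol_ovSet_le_strip (n : ℕ) (c d X : ℝ) (hX : 0 < X) :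
    volume (ovSet n c d X) ≤ ENNReal.ofReal (2*X) := by
  have hsub : ovSet n c d X ⊆ Set.Ico X (3*X) := fun x hx => hx.1
  calc volume (ovSet n c d X) ≤ volume (Set.Ico X (3*X)) := measure_mono hsub
    _ = ENNReal.ofReal (3*X - X) := Real.volume_Ico
    _ = ENNReal.ofReal (2*X) := by congr 1; ring

lemma vol_ovSet_le_slope (n : ℕ) (c d X : ℝ) (hd : d ≠ 0) :
    volume (ovSet n c d X) ≤ ENNReal.ofReal (2*(1/3^(n+1))/|d|) := by
  set δ : ℝ := 1/3^(n+1) with hδ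
  have hδpos : 0 < δ := by positivity
  set p := (-δ - c)/d with hp
  set q := (δ - c)/d with hq
  have hsub : ovSet n c d X ⊆ Set.Icc (min p q) (max p q) := by
    intro x hx
    obtain ⟨_, habs⟩ := hx
    rw [abs_le] at habs
    rcases lt_or_gt_of_ne hd with hneg | hpos
    · constructor
      · refine le_trans (min_le_right p q) ?_
        rw [hq, div_le_iff_of_neg hneg]
        nlinarith [habs.2]
      · refine le_trans ?_ (le_max_left p q)
        rw [hp, le_div_iff_of_neg hneg]
        nlinarith [habs.1]
    · constructor
      · refine le_trans (min_le_left p q) ?_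
        rw [hp, div_le_iff₀ hpos]
        nlinarith [habs.1]
      · refine le_trans ?_ (le_max_right p q)
        rw [hq, le_div_iff₀ hpos]
        nlinarith [habs.2]
  calc volume (ovSet n c d X) ≤ volume (Set.Icc (min p q) (max p q)) := measure_mono hsub
    _ = ENNReal.ofReal (max p q - min p q) := Real.volume_Icc
    _ = ENNReal.ofReal (2*δ/|d|) := by
        congr 1
        rw [max_sub_min_eq_abs, hp, hq, div_sub_div_same,
          show (δ - c - (-δ - c)) = 2*δ by ring, abs_div,
          abs_of_pos (by linarith : (0:ℝ) < 2*δ)]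

lemma pair_nonempty_bound (n : ℕ) (b₁ v₁ b₂ v₂ X : ℝ) (hX : 0 < X)
    (hne : (tube n b₁ v₁ ∩ tube n b₂ v₂ ∩ ((Set.Ico X (3*X)) ×ˢ (Set.univ : Set ℝ))).Nonempty) :
    |b₂ - b₁| ≤ 1/3^(n+1) + |v₂ - v₁| * (3*X) := by
  obtain ⟨⟨x, y⟩, ⟨ht1, ht2⟩, hst⟩ := hne
  have e1 : b₁ + v₁*x ≤ y := ht1.2.2.1
  have e2 : y ≤ b₁ + v₁*x + 1/3^(n+1) := ht1.2.2.2
  have e3 : b₂ + v₂*x ≤ y := ht2.2.2.1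
  have e4 : y ≤ b₂ + v₂*x + 1/3^(n+1) := ht2.2.2.2
  have hx1 : X ≤ x := hst.1.1
  have hx2 : x < 3*X := hst.1.2
  have habs : |(b₂ - b₁) + (v₂ - v₁)*x| ≤ 1/3^(n+1) := by
    rw [abs_le]; constructor <;> nlinarith
  have h2 : |b₂ - b₁| ≤ |(b₂ - b₁) + (v₂ - v₁)*x| + |(v₂ - v₁)*x| := by
    have := abs_add_le ((b₂ - b₁) + (v₂ - v₁)*x) (-((v₂ - v₁)*x))
    simpa using this
  have h3 : |(v₂ - v₁)*x| ≤ |v₂ - v₁| * (3*X) := by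
    rw [abs_mul]
    have : |x| ≤ 3*X := by rw [abs_of_pos (lt_of_lt_of_le hX hx1)]; linarith
    exact mul_le_mul_of_nonneg_left this (abs_nonneg _) |>.trans_eq (by ring)
  linarith

end MeasureLemmas

section CS

lemma rpow_half_sq (x : ℝ≥0∞) : (x ^ ((1:ℝ)/2))^2 = x := by
  rw [← ENNReal.rpow_natCast (x ^ ((1:ℝ)/2)) 2, ← ENNReal.rpow_mul]
  norm_num

/-- Cauchy–Schwarz for a finite family of sets inside `U` -/
lemma cs_lemma {ι : Type*} [Fintype ι] (A : ι → Set (ℝ×ℝ)) (hA : ∀ i, MeasurableSet (A i))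
    {U : Set (ℝ×ℝ)} (hU : MeasurableSet U) (hsub : ∀ i, A i ⊆ U) :
    (∑ i, volume (A i))^2 ≤ volume U * ∑ i : ι, ∑ j : ι, volume (A i ∩ A j) := by
  classical
  set F : ℝ×ℝ → ℝ≥0∞ := fun p => ∑ i, (A i).indicator (fun _ => (1:ℝ≥0∞)) p with hF
  set G : ℝ×ℝ → ℝ≥0∞ := U.indicator (fun _ => (1:ℝ≥0∞)) with hG
  have hFmeas : Measurable F :=
    Finset.measurable_sum _ (fun i _ => measurable_const.indicator (hA i))
  have hGmeas : Measurable G := measurable_const.indicator hU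
  have hFint : ∫⁻ p, F p = ∑ i, volume (A i) := by
    rw [hF, lintegral_finset_sum _ (fun i _ => measurable_const.indicator (hA i))]
    refine Finset.sum_congr rfl fun i _ => ?_
    rw [lintegral_indicator (hA i), setLIntegral_const, one_mul]
  have hFsq : ∫⁻ p, (F p)^2 = ∑ i : ι, ∑ j : ι, volume (A i ∩ A j) := by
    have hpt : ∀ p, (F p)^2
        = ∑ i : ι, ∑ j : ι, (A i ∩ A j).indicator (fun _ => (1:ℝ≥0∞)) p := by
      intro p
      rw [sq, hF, Finset.sum_mul_sum]
      refine Finset.sum_congr rfl fun i _ => Finset.sum_congr rfl fun j _ => ?_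
      rw [← Set.inter_indicator_mul]
      simp
    rw [lintegral_congr hpt,
      lintegral_finset_sum _ (fun i _ => Finset.measurable_sum _
        (fun j _ => measurable_const.indicator ((hA i).inter (hA j))))]
    refine Finset.sum_congr rfl fun i _ => ?_
    rw [lintegral_finset_sum _ (fun j _ => measurable_const.indicator ((hA i).inter (hA j)))]
    refine Finset.sum_congr rfl fun j _ => ?_
    rw [lintegral_indicator ((hA i).inter (hA j)), setLIntegral_const, one_mul]
  have hFG : F = fun p => (F * G) p := by
    funext p
    by_cases hp : p ∈ U
    · simp [hG, Set.indicator_of_mem hp]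
    · have : F p = 0 := by
        rw [hF]
        refine Finset.sum_eq_zero fun i _ => ?_
        exact Set.indicator_of_notMem (fun hc => hp (hsub i hc)) _
      simp [this]
  have hGsq : ∀ p, G p ^ (2:ℝ) = G p := by
    intro p
    by_cases hp : p ∈ U
    · simp [hG, Set.indicator_of_mem hp]
    · simp [hG, Set.indicator_of_notMem hp]
  have hconj : Real.HolderConjugate 2 2 := Real.HolderConjugate.two_two
  have hholder := ENNReal.lintegral_mul_le_Lp_mul_Lq volume hconj
    hFmeas.aemeasurable hGmeas.aemeasurable
  have hrpow : ∀ x : ℝ≥0∞, x ^ (2:ℝ) = x^2 := fun x => by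
    rw [← ENNReal.rpow_natCast x 2]; norm_num
  rw [← hFG] at hholder
  have hGint : ∫⁻ p, G p ^ (2:ℝ) = volume U := by
    rw [lintegral_congr hGsq, hG, lintegral_indicator hU, setLIntegral_const, one_mul]
  rw [hGint] at hholder
  have hFrw : ∫⁻ p, F p ^ (2:ℝ) = ∑ i : ι, ∑ j : ι, volume (A i ∩ A j) := by
    rw [← hFsq]; exact lintegral_congr fun p => hrpow (F p)
  rw [hFrw, hFint] at hholder
  calc (∑ i, volume (A i))^2
      ≤ ((∑ i : ι, ∑ j : ι, volume (A i ∩ A j)) ^ ((1:ℝ)/2) * volume U ^ ((1:ℝ)/2))^2 := by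
        rw [sq, sq]; exact mul_le_mul' hholder hholder
    _ = volume U * ∑ i : ι, ∑ j : ι, volume (A i ∩ A j) := by
        rw [mul_pow, rpow_half_sq, rpow_half_sq, mul_comm]
  
end CS

section Counting

lemma straddle_facts (Q M ρ : ℕ) (hM : 0 < M) (α β : ℕ) (h1 : α < Q*M)
    (h3 : α/M ≠ β/M) (h4 : β ≤ α + ρ) (hlt : α < β) :
    α/M < Q ∧ α < (α/M+1)*M ∧ (α/M+1)*M ≤ β ∧
      (α/M+1)*M - α - 1 < ρ ∧ β - (α/M+1)*M < ρ := by
  have hq : M * (α/M) + α % M = α := Nat.div_add_mod α M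
  have hr : α % M < M := Nat.mod_lt _ hM
  have hqQ : α/M < Q := by
    rw [Nat.div_lt_iff_lt_mul hM]; omega
  have hbd : α < (α/M+1)*M := by
    have hh : (α/M + 1)*M = M*(α/M) + M := by ring
    omega
  have hbd2 : (α/M+1)*M ≤ β := by
    have hqq : α/M ≤ β/M := Nat.div_le_div_right hlt.le
    have hqq2 : α/M + 1 ≤ β/M := by omega
    calc (α/M+1)*M ≤ (β/M)*M := Nat.mul_le_mul_right M hqq2
      _ ≤ β := Nat.div_mul_le_self β M
  exact ⟨hqQ, hbd, hbd2, by omega, by omega⟩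

/-- counting pairs of close integers straddling a block boundary -/
lemma pair_count (Q M ρ : ℕ) (hM : 0 < M) (T : Finset (ℕ × ℕ))
    (hT : ∀ p ∈ T, p.1 < Q*M ∧ p.2 < Q*M ∧ p.1/M ≠ p.2/M ∧ p.2 ≤ p.1 + ρ ∧ p.1 ≤ p.2 + ρ) :
    T.card ≤ 2*Q*ρ*ρ := by
  classical
  set f : ℕ × ℕ → ℕ × ℕ × ℕ × Bool := fun p =>
    if p.1 < p.2 then (p.1/M, (p.1/M+1)*M - p.1 - 1, p.2 - (p.1/M+1)*M, true)
    else (p.2/M, (p.2/M+1)*M - p.2 - 1, p.1 - (p.2/M+1)*M, false) with hf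
  have hcard : (Finset.range Q ×ˢ Finset.range ρ ×ˢ Finset.range ρ ×ˢ
      (Finset.univ : Finset Bool)).card = 2*Q*ρ*ρ := by
    simp [Finset.card_product]
    ring
  rw [← hcard]
  apply Finset.card_le_card_of_injOn f
  · -- maps to
    intro p hp
    obtain ⟨h1, h2, h3, h4, h5⟩ := hT p hp
    have hne : p.1 ≠ p.2 := fun hc => h3 (by rw [hc])
    simp only [Finset.mem_coe, Finset.mem_product, Finset.mem_range, Finset.mem_univ, and_true]
    rcases lt_or_gt_of_ne hne with hlt | hgt
    · obtain ⟨k1, k2, k3, k4, k5⟩ := straddle_facts Q M ρ hM p.1 p.2 h1 h3 h4 hlt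
      simp only [hf, if_pos hlt]
      exact ⟨k1, k4, k5⟩
    · obtain ⟨k1, k2, k3, k4, k5⟩ := straddle_facts Q M ρ hM p.2 p.1 h2 (Ne.symm h3) h5 hgt
      simp only [hf, if_neg (by omega : ¬ p.1 < p.2)]
      exact ⟨k1, k4, k5⟩
  · -- injective
    intro p hp p' hp' heq
    obtain ⟨h1, h2, h3, h4, h5⟩ := hT p hp
    obtain ⟨h1', h2', h3', h4', h5'⟩ := hT p' hp'
    have hne : p.1 ≠ p.2 := fun hc => h3 (by rw [hc])
    have hne' : p'.1 ≠ p'.2 := fun hc => h3' (by rw [hc])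
    have ext1 : p = (p.1, p.2) := rfl
    rcases lt_or_gt_of_ne hne with hlt | hgt <;>
      rcases lt_or_gt_of_ne hne' with hlt' | hgt'
    · obtain ⟨k1, k2, k3, k4, k5⟩ := straddle_facts Q M ρ hM p.1 p.2 h1 h3 h4 hlt
      obtain ⟨k1', k2', k3', k4', k5'⟩ := straddle_facts Q M ρ hM p'.1 p'.2 h1' h3' h4' hlt'
      simp only [hf, if_pos hlt, if_pos hlt', Prod.mk.injEq] at heq
      obtain ⟨e1, e2, e3, _⟩ := heq
      have ebd : (p.1/M+1)*M = (p'.1/M+1)*M := by rw [e1]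
      have ep1 : p.1 = p'.1 := by omega
      have ep2 : p.2 = p'.2 := by omega
      exact Prod.ext ep1 ep2
    · simp only [hf, if_pos hlt, if_neg (by omega : ¬ p'.1 < p'.2), Prod.mk.injEq] at heq
      exact absurd heq.2.2.2 (by simp)
    · simp only [hf, if_neg (by omega : ¬ p.1 < p.2), if_pos hlt', Prod.mk.injEq] at heq
      exact absurd heq.2.2.2 (by simp)
    · obtain ⟨k1, k2, k3, k4, k5⟩ := straddle_facts Q M ρ hM p.2 p.1 h2 (Ne.symm h3) h5 hgt
      obtain ⟨k1', k2', k3', k4', k5'⟩ :=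
        straddle_facts Q M ρ hM p'.2 p'.1 h2' (Ne.symm h3') h5' hgt'
      simp only [hf, if_neg (by omega : ¬ p.1 < p.2), if_neg (by omega : ¬ p'.1 < p'.2),
        Prod.mk.injEq] at heq
      obtain ⟨e1, e2, e3, _⟩ := heq
      have ebd : (p.2/M+1)*M = (p'.2/M+1)*M := by rw [e1]
      have ep1 : p.1 = p'.1 := by omega
      have ep2 : p.2 = p'.2 := by omega
      exact Prod.ext ep1 ep2

end Counting

section MainEstimate
variable {n : ℕ}

lemma fdiff_self (u : Fin n → Fin 3) : fdiff u u = n := by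
  have h1 : fdiff u u ≤ n := fdiff_le u u
  have hspec : n ≤ fdiff u u ∨ dig u (fdiff u u) ≠ dig u (fdiff u u) :=
    Nat.find_spec (⟨n, Or.inl le_rfl⟩ : ∃ m, n ≤ m ∨ dig u m ≠ dig u m)
  rcases hspec with h | h
  · omega
  · exact absurd rfl h

set_option maxHeartbeats 2000000 in
lemma strip_bound (hn : 2 ≤ n) (σ : (Fin n → Fin 3) → (Fin n → Fin 3)) (hσ : Sticky σ)
    (j : ℕ) (hj : 1 ≤ j) (hjn : (3:ℝ)^j ≤ 3*n) :
    ENNReal.ofReal (4/(11934*n)) ≤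
      volume (Kset σ ∩ ((Set.Ico ((1:ℝ)/3^j) (3*((1:ℝ)/3^j))) ×ˢ (Set.univ : Set ℝ))) := by
  classical
  set X : ℝ := 1/3^j with hXdef
  set δ : ℝ := 1/3^(n+1) with hδdef
  have hX : 0 < X := by positivity
  have hδ : 0 < δ := by positivity
  have h3X : 3*X ≤ 1 := by
    rw [hXdef, mul_one_div, div_le_one (by positivity)]
    calc (3:ℝ) = 3^1 := (pow_one 3).symm
      _ ≤ 3^j := pow_le_pow_right₀ (by norm_num) hj
  have hnR : (2:ℝ) ≤ n := by exact_mod_cast hn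
  have hXn : 1/(3*(n:ℝ)) ≤ X := by
    rw [hXdef]
    apply one_div_le_one_div_of_le (by positivity) hjn
  set St : Set (ℝ×ℝ) := (Set.Ico X (3*X)) ×ˢ (Set.univ : Set ℝ) with hSt
  set A : (Fin n → Fin 3) → Set (ℝ×ℝ) :=
    fun s => tube n (valF s / 3) (valF (σ s)) ∩ St with hA
  have hAmeas : ∀ s, MeasurableSet (A s) :=
    fun s => (tube_measurable _ _ _).inter (stripSet_measurable X)
  have hUmeas : MeasurableSet (Kset σ ∩ St) :=
    (MeasurableSet.iUnion fun s => tube_measurable n _ _).inter (stripSet_measurable X)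
  have hsub : ∀ s, A s ⊆ Kset σ ∩ St := fun s =>
    Set.inter_subset_inter (Set.subset_iUnion (fun s => Ptube σ s) s) subset_rfl
  have hCS := cs_lemma A hAmeas hUmeas hsub
  -- the numerator
  have hnum : ∑ s, volume (A s) = ENNReal.ofReal (2*X/3) := by
    have h1 : ∀ s, volume (A s) = ENNReal.ofReal (2*X*δ) := fun s =>
      vol_tube_strip n _ _ X hX h3X
    rw [Finset.sum_congr rfl (fun s _ => h1 s), Finset.sum_const, Finset.card_univ]
    have hcard : Fintype.card (Fin n → Fin 3) = 3^n := by
      simp [Fintype.card_fun]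
    rw [hcard, nsmul_eq_mul, ← ENNReal.ofReal_natCast (3^n),
      ← ENNReal.ofReal_mul (by positivity)]
    congr 1
    rw [hδdef]
    push_cast
    rw [pow_succ]
    have h3n : (3:ℝ)^n ≠ 0 := by positivity
    field_simp
  -- pair volumes
  set V : (Fin n → Fin 3) × (Fin n → Fin 3) → ℝ≥0∞ := fun p =>
    volume (tube n (valF p.1/3) (valF (σ p.1)) ∩ tube n (valF p.2/3) (valF (σ p.2)) ∩ St)
    with hV
  have hAint : ∀ s t : Fin n → Fin 3, volume (A s ∩ A t) = V (s, t) := by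
    intro s t
    rw [hV, hA]
    congr 1
    ext p
    simp only [Set.mem_inter_iff]
    tauto
  have hDsum : ∑ s, ∑ t, volume (A s ∩ A t)
      = ∑ p : (Fin n → Fin 3) × (Fin n → Fin 3), V p := by
    rw [show (∑ s, ∑ t, volume (A s ∩ A t)) = ∑ s, ∑ t, V (s, t) from
      Finset.sum_congr rfl fun s _ => Finset.sum_congr rfl fun t _ => hAint s t]
    rw [← Finset.sum_product' Finset.univ Finset.univ (fun s t => V (s, t))]
    rw [Finset.univ_product_univ]
  set key : (Fin n → Fin 3) × (Fin n → Fin 3) → ℕ := fun p => fdiff (σ p.1) (σ p.2) with hkey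
  have hfib : ∑ p : (Fin n → Fin 3) × (Fin n → Fin 3), V p
      = ∑ m ∈ Finset.range (n+1), ∑ p ∈ Finset.univ.filter (fun p => key p = m), V p := by
    rw [Finset.sum_fiberwise_of_maps_to (fun p _ => Finset.mem_range.mpr
      (Nat.lt_succ_of_le (fdiff_le _ _))) V]
  -- generic per-pair bounds
  have hVle_strip : ∀ p, V p ≤ ENNReal.ofReal (δ*(2*X)) := by
    intro p
    rw [hV]
    calc volume _ ≤ ENNReal.ofReal δ * volume (ovSet n _ _ X) := vol_pair_le n _ _ _ _ X
      _ ≤ ENNReal.ofReal δ * ENNReal.ofReal (2*X) :=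
          mul_le_mul_right (vol_ovSet_le_strip n _ _ X hX) _
      _ = ENNReal.ofReal (δ*(2*X)) := (ENNReal.ofReal_mul hδ.le).symm
  have hVnonempty : ∀ p : (Fin n → Fin 3) × (Fin n → Fin 3), V p ≠ 0 →
      |valF p.2/3 - valF p.1/3| ≤ δ + |valF (σ p.2) - valF (σ p.1)| * (3*X) := by
    intro p hVp
    apply pair_nonempty_bound n _ _ _ _ X hX
    rw [Set.nonempty_iff_ne_empty]
    intro hc
    apply hVp
    rw [hV]
    simp only
    rw [show tube n (valF p.1/3) (valF (σ p.1)) ∩ tube n (valF p.2/3) (valF (σ p.2)) ∩ St = ∅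
      from hc]
    exact measure_empty
  -- fiber n : pairs with equal σ-values
  have hfibn : ∑ p ∈ Finset.univ.filter (fun p => key p = n), V p
      ≤ ENNReal.ofReal (2*X) := by
    rw [← Finset.sum_filter_ne_zero]
    set Fn := (Finset.univ.filter (fun p => key p = n)).filter (fun p => V p ≠ 0) with hFn
    have hencb : ∀ p ∈ Fn, enc p.1 < 3^n ∧ enc p.2 < 3^n
        ∧ enc p.2 ≤ enc p.1 + 1 ∧ enc p.1 ≤ enc p.2 + 1 := by
      intro p hp
      have hV0 : V p ≠ 0 := (Finset.mem_filter.mp hp).2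
      have hσeq : σ p.1 = σ p.2 := by
        by_contra hc
        obtain ⟨hlt, _, _⟩ := fdiff_spec hc
        have hk : key p = n := by
          have := (Finset.mem_filter.mp (Finset.mem_filter.mp hp).1).2
          exact this
        rw [hkey] at hk
        simp only at hk
        omega
      have hb := hVnonempty p hV0
      rw [hσeq, sub_self, abs_zero, zero_mul, add_zero] at hb
      have hb2 : |valF p.2 - valF p.1| ≤ 3*δ := by
        have h1 : |valF p.2/3 - valF p.1/3| = |valF p.2 - valF p.1|/3 := by
          rw [div_sub_div_same, abs_div]
          norm_num
        rw [h1] at hb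
        linarith
      have hb3 : |(enc p.2 : ℝ) - enc p.1| ≤ 1 := by
        rw [enc_val, enc_val, ← mul_sub, abs_mul,
          abs_of_pos (by positivity : (0:ℝ) < 3^n)]
        have h3δ : (3:ℝ)^n * (3*δ) = 1 := by
          rw [hδdef, pow_succ]
          field_simp
        calc (3:ℝ)^n * |valF p.2 - valF p.1| ≤ 3^n * (3*δ) :=
            mul_le_mul_of_nonneg_left hb2 (by positivity)
          _ = 1 := h3δ
      have hc1 : (enc p.2 : ℝ) ≤ enc p.1 + 1 := by
        rw [abs_le] at hb3; linarith [hb3.2]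
      have hc2 : (enc p.1 : ℝ) ≤ enc p.2 + 1 := by
        rw [abs_le] at hb3; linarith [hb3.1]
      exact ⟨enc_lt p.1, enc_lt p.2, by exact_mod_cast hc1, by exact_mod_cast hc2⟩
    have hcard : Fn.card ≤ 3^n * 3 := by
      have h := Finset.card_le_card_of_injOn
        (f := fun p : (Fin n → Fin 3) × (Fin n → Fin 3) => (enc p.1, enc p.2 + 1 - enc p.1))
        (t := Finset.range (3^n) ×ˢ Finset.range 3)
        (fun p hp => by
          obtain ⟨q1, q2, q3, q4⟩ := hencb p hp
          simp only [Finset.mem_coe, Finset.mem_product, Finset.mem_range]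
          exact ⟨q1, by omega⟩)
        (fun p hp p' hp' heq => by
          obtain ⟨q1, q2, q3, q4⟩ := hencb p hp
          obtain ⟨q1', q2', q3', q4'⟩ := hencb p' hp'
          simp only [Prod.mk.injEq] at heq
          obtain ⟨e1, e2⟩ := heq
          have e3 : enc p.2 = enc p'.2 := by omega
          exact Prod.ext (enc_inj e1) (enc_inj e3))
      simpa using h
    calc ∑ p ∈ Fn, V p ≤ Fn.card • ENNReal.ofReal (δ*(2*X)) :=
          Finset.sum_le_card_nsmul Fn V _ (fun p _ => hVle_strip p)
      _ ≤ (3^n*3) • ENNReal.ofReal (δ*(2*X)) := by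
          rw [nsmul_eq_mul, nsmul_eq_mul]
          exact mul_le_mul_left (by exact_mod_cast hcard) _
      _ = ENNReal.ofReal (2*X) := by
          rw [nsmul_eq_mul, ← ENNReal.ofReal_natCast (3^n*3),
            ← ENNReal.ofReal_mul (by positivity)]
          congr 1
          push_cast
          rw [hδdef, pow_succ]
          have h3n : (3:ℝ)^n ≠ 0 := by positivity
          field_simp
  -- fiber l < n : pairs with first σ-difference at digit l
  have hfibl : ∀ l ∈ Finset.range n, ∑ p ∈ Finset.univ.filter (fun p => key p = l), V p
      ≤ ENNReal.ofReal (1296*X^2 + 16*X*(δ*3^(l+1))) := by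
    intro l hlmem
    have hln : l < n := Finset.mem_range.mp hlmem
    rw [← Finset.sum_filter_ne_zero]
    set Fl := (Finset.univ.filter (fun p => key p = l)).filter (fun p => V p ≠ 0) with hFl
    set ρ : ℕ := 1 + 3^((n+2) - (l+j)) with hρdef
    have hmem : ∀ p ∈ Fl, σ p.1 ≠ σ p.2 ∧ fdiff (σ p.1) (σ p.2) = l ∧ V p ≠ 0 := by
      intro p hp
      have h2 := (Finset.mem_filter.mp hp).2
      have h1 : key p = l := (Finset.mem_filter.mp (Finset.mem_filter.mp hp).1).2
      rw [hkey] at h1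
      simp only at h1
      have hne : σ p.1 ≠ σ p.2 := by
        intro hc
        rw [hc, fdiff_self] at h1
        omega
      exact ⟨hne, h1, h2⟩
    have hslope : ∀ p ∈ Fl, 1/3^(l+1) ≤ |valF (σ p.2) - valF (σ p.1)| := by
      intro p hp
      obtain ⟨hne, hl1, _⟩ := hmem p hp
      have := valF_diff_lower hne (hσ.1 p.1) (hσ.1 p.2)
      rw [hl1] at this
      rwa [abs_sub_comm]
    have hVle : ∀ p ∈ Fl, V p ≤ ENNReal.ofReal
        (if l + j ≤ n+2 then δ*(2*(δ*3^(l+1))) else δ*(2*X)) := by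
      intro p hp
      by_cases hcase : l + j ≤ n+2
      · rw [if_pos hcase, hV]
        have hs := hslope p hp
        have hdne : valF (σ p.2) - valF (σ p.1) ≠ 0 := by
          intro hc
          rw [hc, abs_zero] at hs
          have : (0:ℝ) < 1/3^(l+1) := by positivity
          linarith
        calc volume _ ≤ ENNReal.ofReal δ * volume (ovSet n _ _ X) := vol_pair_le n _ _ _ _ X
          _ ≤ ENNReal.ofReal δ * ENNReal.ofReal (2*δ/|valF (σ p.2) - valF (σ p.1)|) :=
              mul_le_mul_right (vol_ovSet_le_slope n _ _ X hdne) _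
          _ ≤ ENNReal.ofReal δ * ENNReal.ofReal (2*(δ*3^(l+1))) := by
              apply mul_le_mul_right
              apply ENNReal.ofReal_le_ofReal
              rw [show 2*(δ*3^(l+1)) = 2*δ/(1/3^(l+1)) by field_simp]
              exact div_le_div_of_nonneg_left (by positivity) (by positivity) hs
          _ = ENNReal.ofReal (δ*(2*(δ*3^(l+1)))) := (ENNReal.ofReal_mul hδ.le).symm
      · rw [if_neg hcase]
        exact hVle_strip p
    have hclose : ∀ p ∈ Fl, enc p.1 < 3^(l+1)*3^(n-1-l) ∧ enc p.2 < 3^(l+1)*3^(n-1-l) ∧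
        enc p.1/3^(n-1-l) ≠ enc p.2/3^(n-1-l) ∧
        enc p.2 ≤ enc p.1 + ρ ∧ enc p.1 ≤ enc p.2 + ρ := by
      intro p hp
      obtain ⟨hne, hl1, hV0⟩ := hmem p hp
      have hQM : 3^(l+1)*3^(n-1-l) = 3^n := by
        rw [← pow_add]; congr 1; omega
      have hdig : ∃ m ≤ l, dig p.1 m ≠ dig p.2 m := by
        obtain ⟨m, hm1, hm2⟩ := sticky_digit hσ hne
        exact ⟨m, by omega, hm2⟩
      have hdivne : enc p.1/3^(n-1-l) ≠ enc p.2/3^(n-1-l) := by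
        rw [enc_div_pref hln, enc_div_pref hln]
        exact pref_ne hln hdig
      -- closeness
      have hb := hVnonempty p hV0
      have hvu : |valF (σ p.2) - valF (σ p.1)| ≤ 1/3^l := by
        have h1 := valF_diff_upper (σ p.1) (σ p.2)
        rw [hl1] at h1
        rwa [abs_sub_comm]
      have hb2 : |valF p.2 - valF p.1| ≤ 3*δ + (1/3^l)*(9*X) := by
        have h1 : |valF p.2/3 - valF p.1/3| = |valF p.2 - valF p.1|/3 := by
          rw [div_sub_div_same, abs_div]
          norm_num
        rw [h1] at hb
        have h2 : |valF (σ p.2) - valF (σ p.1)| * (3*X) ≤ (1/3^l) * (3*X) :=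
          mul_le_mul_of_nonneg_right hvu (by positivity)
        have h4 : ((1:ℝ)/3^l)*(9*X) = 3*((1/3^l)*(3*X)) := by ring
        linarith [hb, h2]
      have hb3 : |(enc p.2 : ℝ) - enc p.1| ≤ (ρ:ℕ) := by
        rw [enc_val, enc_val, ← mul_sub, abs_mul,
          abs_of_pos (by positivity : (0:ℝ) < 3^n)]
        have hstep : (3:ℝ)^n * (3*δ + (1/3^l)*(9*X)) ≤ ρ := by
          have he1 : (3:ℝ)^n * (3*δ) = 1 := by
            rw [hδdef, pow_succ]; field_simp
          have he2 : (3:ℝ)^n * ((1/3^l)*(9*X)) = 3^(n+2)/3^(l+j) := by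
            rw [hXdef, pow_add, pow_add]
            field_simp
            ring
          have he3 : (3:ℝ)^(n+2)/3^(l+j) ≤ 3^((n+2)-(l+j)) := by
            by_cases hc : l + j ≤ n+2
            · have heq : (3:ℝ)^(n+2) = 3^(l+j) * 3^((n+2)-(l+j)) := by
                rw [← pow_add]; congr 1; omega
              rw [heq, mul_comm, mul_div_assoc, div_self (by positivity : ((3:ℝ)^(l+j)) ≠ 0),
                mul_one]
            · have h4 : (3:ℝ)^(n+2) ≤ 3^(l+j) :=
                pow_le_pow_right₀ (by norm_num) (by omega)
              have h5 : (3:ℝ)^(n+2)/3^(l+j) ≤ 1 := by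
                rw [div_le_one (by positivity)]; exact h4
              have h6 : ((n+2)-(l+j) : ℕ) = 0 := by omega
              rw [h6, pow_zero]
              exact h5
          have hρcast : (ρ:ℝ) = 1 + 3^((n+2)-(l+j)) := by
            rw [hρdef]; push_cast; norm_num
          rw [mul_add, he1, hρcast]
          linarith
        calc (3:ℝ)^n * |valF p.2 - valF p.1| ≤ 3^n * (3*δ + (1/3^l)*(9*X)) :=
            mul_le_mul_of_nonneg_left hb2 (by positivity)
          _ ≤ ρ := hstep
      have hc1 : (enc p.2 : ℝ) ≤ enc p.1 + ρ := by
        rw [abs_le] at hb3; linarith [hb3.2]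
      have hc2 : (enc p.1 : ℝ) ≤ enc p.2 + ρ := by
        rw [abs_le] at hb3; linarith [hb3.1]
      rw [hQM]
      exact ⟨enc_lt p.1, enc_lt p.2, hdivne, by exact_mod_cast hc1, by exact_mod_cast hc2⟩
    have hcard : Fl.card ≤ 2*3^(l+1)*ρ*ρ := by
      have hinj : Set.InjOn (fun p : (Fin n → Fin 3) × (Fin n → Fin 3) =>
          (enc p.1, enc p.2)) Fl := by
        intro p hp p' hp' heq
        simp only [Prod.mk.injEq] at heq
        exact Prod.ext (enc_inj heq.1) (enc_inj heq.2)
      rw [← Finset.card_image_of_injOn hinj]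
      apply pair_count (3^(l+1)) (3^(n-1-l)) ρ (Nat.pow_pos (by norm_num))
      intro q hq
      obtain ⟨p, hp, rfl⟩ := Finset.mem_image.mp hq
      exact hclose p hp
    calc ∑ p ∈ Fl, V p
        ≤ Fl.card • ENNReal.ofReal (if l + j ≤ n+2 then δ*(2*(δ*3^(l+1))) else δ*(2*X)) :=
          Finset.sum_le_card_nsmul Fl V _ hVle
      _ ≤ (2*3^(l+1)*ρ*ρ) • ENNReal.ofReal
            (if l + j ≤ n+2 then δ*(2*(δ*3^(l+1))) else δ*(2*X)) := by
          rw [nsmul_eq_mul, nsmul_eq_mul]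
          apply mul_le_mul_left
          exact_mod_cast hcard
      _ ≤ ENNReal.ofReal (1296*X^2 + 16*X*(δ*3^(l+1))) := by
          rw [nsmul_eq_mul, ← ENNReal.ofReal_natCast (2*3^(l+1)*ρ*ρ),
            ← ENNReal.ofReal_mul (by positivity)]
          apply ENNReal.ofReal_le_ofReal
          by_cases hcase : l + j ≤ n+2
          · rw [if_pos hcase]
            have hρcast : (((2*3^(l+1)*ρ*ρ : ℕ)):ℝ) = 2*3^(l+1)*(1+3^((n+2)-(l+j)))*(1+3^((n+2)-(l+j))) := by
              rw [hρdef]; push_cast; norm_num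
            set a : ℝ := δ*3^(l+1) with hadef
            have ha : 0 < a := by positivity
            have hpow : (3:ℝ)^(l+1) * 3^((n+2)-(l+j)) * 3^j = 9 * 3^(n+1) := by
              rw [← pow_add, ← pow_add,
                show (l+1)+((n+2)-(l+j))+j = (n+1)+2 from by omega, pow_add]
              ring
            have hae : a * 3^((n+2)-(l+j)) = 9*X := by
              rw [hadef, hδdef, hXdef]
              field_simp
              linear_combination hpow
            have h3e : (1:ℝ) ≤ 3^((n+2)-(l+j)) := one_le_pow₀ (by norm_num)
            rw [hρcast]
            have hgoal : 2*3^(l+1)*(1+3^((n+2)-(l+j)))*(1+3^((n+2)-(l+j)))*(δ*(2*a))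
                ≤ 1296*X^2 := by
              have hexp : (2:ℝ)*3^(l+1)*(1+3^((n+2)-(l+j)))*(1+3^((n+2)-(l+j)))*(δ*(2*a))
                  = 4*(a*(1+3^((n+2)-(l+j))))^2 := by
                rw [hadef]; ring
              rw [hexp]
              have h1 : a*(1+3^((n+2)-(l+j))) = a + 9*X := by rw [mul_add, mul_one, hae]
              rw [h1]
              have h2 : a ≤ 9*X := by
                calc a = a * 1 := (mul_one a).symm
                  _ ≤ a * 3^((n+2)-(l+j)) := by
                      apply mul_le_mul_of_nonneg_left h3e ha.le
                  _ = 9*X := hae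
              nlinarith [hX]
            calc 2*3^(l+1)*(1+3^((n+2)-(l+j)))*(1+3^((n+2)-(l+j)))*(δ*(2*(δ*3^(l+1))))
                = 2*3^(l+1)*(1+3^((n+2)-(l+j)))*(1+3^((n+2)-(l+j)))*(δ*(2*a)) := by
                  rw [hadef]
              _ ≤ 1296*X^2 := hgoal
              _ ≤ 1296*X^2 + 16*X*(δ*3^(l+1)) := by
                  have hpos : (0:ℝ) ≤ 16*X*(δ*3^(l+1)) := by positivity
                  linarith
          · rw [if_neg hcase]
            have h6 : ((n+2)-(l+j) : ℕ) = 0 := by omega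
            have hρ2 : (ρ:ℕ) = 2 := by rw [hρdef, h6]; norm_num
            rw [hρ2]
            push_cast
            have heq16 : (2:ℝ)*3^(l+1)*2*2*(δ*(2*X)) = 16*X*(δ*3^(l+1)) := by ring
            rw [heq16]
            have hpos : (0:ℝ) ≤ 1296*X^2 := by positivity
            linarith
  -- total bound on the double sum
  have hDle : ∑ p : (Fin n → Fin 3) × (Fin n → Fin 3), V p
      ≤ ENNReal.ofReal (1326*n*X^2) := by
    rw [hfib, Finset.sum_range_succ]
    have h1 : ∑ m ∈ Finset.range n, ∑ p ∈ Finset.univ.filter (fun p => key p = m), V p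
        ≤ ∑ l ∈ Finset.range n, ENNReal.ofReal (1296*X^2 + 16*X*(δ*3^(l+1))) :=
      Finset.sum_le_sum hfibl
    have h2 : ∑ l ∈ Finset.range n, ENNReal.ofReal (1296*X^2 + 16*X*(δ*3^(l+1)))
        = ENNReal.ofReal (∑ l ∈ Finset.range n, (1296*X^2 + 16*X*(δ*3^(l+1)))) :=
      (ENNReal.ofReal_sum_of_nonneg (fun l _ => by positivity)).symm
    have h3 : ∑ l ∈ Finset.range n, (1296*X^2 + 16*X*(δ*3^(l+1))) + 2*X
        ≤ 1326*n*X^2 := by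
      have hgeo : ∑ l ∈ Finset.range n, (3:ℝ)^(l+1) = 3*((3^n - 1)/2) := by
        have hg := geom_sum_eq (by norm_num : (3:ℝ) ≠ 1) n
        calc ∑ l ∈ Finset.range n, (3:ℝ)^(l+1)
            = ∑ l ∈ Finset.range n, (3:ℝ)^l * 3 := by
              refine Finset.sum_congr rfl fun l _ => ?_
              rw [pow_succ]
          _ = (∑ l ∈ Finset.range n, (3:ℝ)^l) * 3 := (Finset.sum_mul _ _ _).symm
          _ = ((3^n - 1)/(3-1)) * 3 := by rw [hg]
          _ = 3*((3^n - 1)/2) := by ring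
      have hsum : ∑ l ∈ Finset.range n, (1296*X^2 + 16*X*(δ*3^(l+1)))
          = 1296*n*X^2 + 16*X*δ*(3*((3^n - 1)/2)) := by
        rw [Finset.sum_add_distrib, Finset.sum_const, Finset.card_range, nsmul_eq_mul]
        congr 1
        · ring
        · rw [show (fun l => 16*X*(δ*3^(l+1))) = fun l => (16*X*δ)*(3:ℝ)^(l+1) from
            funext fun l => by ring]
          rw [← Finset.mul_sum, hgeo]
      rw [hsum]
      have hδ3 : δ*3^(n+1) = 1 := by
        rw [hδdef]; field_simp
      have hδ3' : δ*(3*((3^n - 1)/2)) ≤ 1/2 := by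
        have he : δ*(3*((3^n - 1)/2)) = (δ*3^(n+1) - 3*δ)/2 := by
          rw [pow_succ]; ring
        rw [he, hδ3]
        linarith [hδ.le]
      have h3nX : (1:ℝ) ≤ 3*(n:ℝ)*X := by
        rw [div_le_iff₀ (by positivity : (0:ℝ) < 3*(n:ℝ))] at hXn
        have e : X*(3*(n:ℝ)) = 3*(n:ℝ)*X := by ring
        linarith
      have h10 : 10*X ≤ 30*(n:ℝ)*X^2 := by
        calc 10*X = 10*X*1 := by ring
          _ ≤ 10*X*(3*(n:ℝ)*X) := by
              apply mul_le_mul_of_nonneg_left h3nX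
              positivity
          _ = 30*(n:ℝ)*X^2 := by ring
      have h16 : 16*X*δ*(3*((3^n-1)/2)) ≤ 8*X := by
        calc 16*X*δ*(3*((3^n-1)/2)) = 16*X*(δ*(3*((3^n-1)/2))) := by ring
          _ ≤ 16*X*(1/2) := mul_le_mul_of_nonneg_left hδ3' (by positivity)
          _ = 8*X := by ring
      linarith [h10, h16]
    calc ∑ m ∈ Finset.range n, (∑ p ∈ Finset.univ.filter (fun p => key p = m), V p)
          + ∑ p ∈ Finset.univ.filter (fun p => key p = n), V p
        ≤ ENNReal.ofReal (∑ l ∈ Finset.range n, (1296*X^2 + 16*X*(δ*3^(l+1))))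
          + ENNReal.ofReal (2*X) := by
          rw [← h2]
          exact add_le_add h1 hfibn
      _ = ENNReal.ofReal (∑ l ∈ Finset.range n, (1296*X^2 + 16*X*(δ*3^(l+1))) + 2*X) :=
          (ENNReal.ofReal_add (Finset.sum_nonneg fun l _ => by positivity)
            (by positivity)).symm
      _ ≤ ENNReal.ofReal (1326*n*X^2) := ENNReal.ofReal_le_ofReal h3
  -- conclude via Cauchy-Schwarz
  rw [hnum, hDsum] at hCS
  have hCS2 : ENNReal.ofReal ((2*X/3)^2)
      ≤ volume (Kset σ ∩ St) * ENNReal.ofReal (1326*n*X^2) := by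
    calc ENNReal.ofReal ((2*X/3)^2) = (ENNReal.ofReal (2*X/3))^2 :=
          ENNReal.ofReal_pow (by positivity) 2
      _ ≤ volume (Kset σ ∩ St) * ∑ p : (Fin n → Fin 3) × (Fin n → Fin 3), V p := hCS
      _ ≤ volume (Kset σ ∩ St) * ENNReal.ofReal (1326*n*X^2) := mul_le_mul_right hDle _
  have hb0 : ENNReal.ofReal (1326*n*X^2) ≠ 0 := by
    have : (0:ℝ) < 1326*n*X^2 := by positivity
    exact (ENNReal.ofReal_pos.mpr this).ne'
  have hdiv : ENNReal.ofReal ((2*X/3)^2) / ENNReal.ofReal (1326*n*X^2)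
      ≤ volume (Kset σ ∩ St) := by
    rw [ENNReal.div_le_iff_le_mul (Or.inl hb0) (Or.inl ENNReal.ofReal_ne_top)]
    exact hCS2
  refine le_trans ?_ hdiv
  rw [← ENNReal.ofReal_div_of_pos (by positivity)]
  apply ENNReal.ofReal_le_ofReal
  have heq : (2*X/3)^2 / (1326*n*X^2) = 4/(11934*n) := by
    rw [div_eq_div_iff (by positivity) (by positivity)]
    ring
  rw [heq]

end MainEstimate
end KakeyaLB

open KakeyaLB in
theorem Kset_measure_lower_bound' :
    ∃ c : ℝ, 0 < c ∧ ∀ (n : ℕ), 2 ≤ n →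
      ∀ σ : (Fin n → Fin 3) → (Fin n → Fin 3), Sticky σ →
      ENNReal.ofReal (c * Real.log n / n) ≤ volume (Kset σ) := by
  have hlog3 : 0 < Real.log 3 := Real.log_pos (by norm_num)
  refine ⟨1/(12000*Real.log 3), by positivity, ?_⟩
  intro n hn σ hσ
  classical
  set J : ℕ := max (Nat.log 3 n) 1 with hJ
  have hJ1 : 1 ≤ J := le_max_right _ _
  have h3J : (3:ℕ)^J ≤ 3*n := by
    rcases max_cases (Nat.log 3 n) 1 with ⟨hm, hge⟩ | ⟨hm, hlt⟩
    · rw [hJ, hm]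
      have h1 : 3^(Nat.log 3 n) ≤ n := Nat.pow_log_le_self 3 (by omega)
      omega
    · rw [hJ, hm]
      omega
  set Sj : ℕ → Set (ℝ×ℝ) :=
    fun j => (Set.Ico ((1:ℝ)/3^j) (3*((1:ℝ)/3^j))) ×ˢ (Set.univ : Set ℝ) with hSj
  have hstrip : ∀ j ∈ Finset.Icc 1 J,
      ENNReal.ofReal (4/(11934*(n:ℝ))) ≤ volume (Kset σ ∩ Sj j) := by
    intro j hjmem
    obtain ⟨hj1, hjJ⟩ := Finset.mem_Icc.mp hjmem
    apply strip_bound hn σ hσ j hj1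
    have h1 : (3:ℕ)^j ≤ 3^J := Nat.pow_le_pow_right (by norm_num) hjJ
    have h2 : (3:ℕ)^j ≤ 3*n := le_trans h1 h3J
    calc (3:ℝ)^j = ((3^j : ℕ) : ℝ) := by push_cast; ring
      _ ≤ ((3*n : ℕ) : ℝ) := by exact_mod_cast h2
      _ = 3*(n:ℝ) := by push_cast; ring
  have hdisj : Set.PairwiseDisjoint (↑(Finset.Icc 1 J))
      (fun j => Kset σ ∩ Sj j) := by
    intro a ha b hb hab
    have hkey : ∀ x : ℝ, ∀ a b : ℕ, a < b →
        x ∈ Set.Ico ((1:ℝ)/3^a) (3*((1:ℝ)/3^a)) →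
        x ∈ Set.Ico ((1:ℝ)/3^b) (3*((1:ℝ)/3^b)) → False := by
      intro x a b hab hxa hxb
      have h1 : 3*((1:ℝ)/3^b) ≤ 1/3^a := by
        rw [mul_one_div, div_le_div_iff₀ (by positivity) (by positivity)]
        calc (3:ℝ)*3^a = 3^(a+1) := by rw [pow_succ]; ring
          _ ≤ 3^b := pow_le_pow_right₀ (by norm_num) (by omega)
          _ = 1*3^b := by ring
      exact absurd (lt_of_lt_of_le hxb.2 (le_trans h1 hxa.1)) (lt_irrefl x)
    apply Set.disjoint_left.mpr
    rintro ⟨x, y⟩ hpa hpb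
    have hxa : x ∈ Set.Ico ((1:ℝ)/3^a) (3*((1:ℝ)/3^a)) := hpa.2.1
    have hxb : x ∈ Set.Ico ((1:ℝ)/3^b) (3*((1:ℝ)/3^b)) := hpb.2.1
    rcases lt_or_gt_of_ne hab with h | h
    · exact hkey x a b h hxa hxb
    · exact hkey x b a h hxb hxa
  have hmeas : ∀ j ∈ Finset.Icc 1 J, MeasurableSet (Kset σ ∩ Sj j) := fun j _ =>
    (MeasurableSet.iUnion fun s => tube_measurable n _ _).inter
      (measurableSet_Ico.prod MeasurableSet.univ)
  have hsum : volume (⋃ j ∈ Finset.Icc 1 J, (Kset σ ∩ Sj j))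
      = ∑ j ∈ Finset.Icc 1 J, volume (Kset σ ∩ Sj j) :=
    measure_biUnion_finset hdisj hmeas
  have hchain : (J : ℝ≥0∞) * ENNReal.ofReal (4/(11934*(n:ℝ))) ≤ volume (Kset σ) := by
    calc (J : ℝ≥0∞) * ENNReal.ofReal (4/(11934*(n:ℝ)))
        = ∑ j ∈ Finset.Icc 1 J, ENNReal.ofReal (4/(11934*(n:ℝ))) := by
          rw [Finset.sum_const, Nat.card_Icc]
          simp [nsmul_eq_mul]
      _ ≤ ∑ j ∈ Finset.Icc 1 J, volume (Kset σ ∩ Sj j) := Finset.sum_le_sum hstrip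
      _ = volume (⋃ j ∈ Finset.Icc 1 J, (Kset σ ∩ Sj j)) := hsum.symm
      _ ≤ volume (Kset σ) := by
          apply measure_mono
          exact Set.iUnion₂_subset fun j _ => Set.inter_subset_left
  refine le_trans ?_ hchain
  have hJcast : (J : ℝ≥0∞) * ENNReal.ofReal (4/(11934*(n:ℝ)))
      = ENNReal.ofReal ((J:ℝ)*(4/(11934*(n:ℝ)))) := by
    rw [ENNReal.ofReal_mul (by positivity), ENNReal.ofReal_natCast]
  rw [hJcast]
  apply ENNReal.ofReal_le_ofReal
  -- real inequality
  have hnpos : (0:ℝ) < n := by positivity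
  have hn3 : n < 3^(J+1) := by
    have h1 : n < 3^(Nat.log 3 n + 1) := Nat.lt_pow_succ_log_self (by norm_num) n
    have h2 : (3:ℕ)^(Nat.log 3 n + 1) ≤ 3^(J+1) :=
      Nat.pow_le_pow_right (by norm_num) (by omega)
    omega
  have hlogn : Real.log n ≤ 2*J*Real.log 3 := by
    have h1 : (n:ℝ) ≤ (3:ℝ)^(2*J) := by
      have h2 : n < 3^(2*J) := by
        calc n < 3^(J+1) := hn3
          _ ≤ 3^(2*J) := Nat.pow_le_pow_right (by norm_num) (by omega)
      calc (n:ℝ) ≤ ((3^(2*J) : ℕ) : ℝ) := by exact_mod_cast h2.le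
        _ = (3:ℝ)^(2*J) := by push_cast; ring
    calc Real.log n ≤ Real.log ((3:ℝ)^(2*J)) :=
        Real.log_le_log hnpos h1
      _ = (2*J)*Real.log 3 := by rw [Real.log_pow]; push_cast; ring
      _ = 2*J*Real.log 3 := by ring
  have hJpos : (0:ℝ) ≤ (J:ℝ) := Nat.cast_nonneg J
  have key : (1/(12000*Real.log 3)) * Real.log n ≤ (J:ℝ)*4/11934 := by
    have h1 : (1/(12000*Real.log 3)) * Real.log n
        ≤ (1/(12000*Real.log 3)) * (2*J*Real.log 3) :=
      mul_le_mul_of_nonneg_left hlogn (by positivity)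
    have h2 : (1/(12000*Real.log 3)) * (2*(J:ℝ)*Real.log 3) = (J:ℝ)/6000 := by
      field_simp
      ring
    have h3 : (J:ℝ)/6000 ≤ (J:ℝ)*4/11934 := by
      rw [div_le_div_iff₀ (by norm_num) (by norm_num)]
      nlinarith [hJpos]
    linarith
  have hrhs : (J:ℝ)*(4/(11934*(n:ℝ))) = ((J:ℝ)*4/11934)/n := by
    field_simp
  rw [hrhs]
  gcongr



/-- Lemma 1.1: for every sticky map `σ : T_n → C_n` (with `n ≥ 2`),
`|K_σ| ≥ c * log n / n` for an absolute constant `c > 0`. -/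
theorem Kset_measure_lower_bound :
    ∃ c : ℝ, 0 < c ∧ ∀ (n : ℕ), 2 ≤ n →
      ∀ σ : (Fin n → Fin 3) → (Fin n → Fin 3), Sticky σ →
      ENNReal.ofReal (c * Real.log n / n) ≤ volume (Kset σ) := by
  exact Kset_measure_lower_bound'
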